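/- arXiv:2407.18157 — 2 statements merged into one kernel-verified Lean document; each statement's English description precedes it below -/
import Mathlib

section
/- For two Laplace distributions Lap(μ₀, b) and Lap(μ₁, b) with μ₀ < μ₁ and scale b > 0, the likelihood-ratio rejection region S = {z : density₀(z) < density₁(z)} equals the interval ((μ₀+μ₁)/2, ∞), and the probability of Lap(μ₀, b) assigning mass to S equals (1/2)·exp(−(μ₁−μ₀)/(2b)). -/
open Real MeasureTheory

/-- Density of the Laplace distribution `Lap(μ, b)`. -/
noncomputable def lapDensity (μ b z : ℝ) : ℝ := (1 / (2 * b)) * Real.exp (-|z - μ| / b)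

/-- For two Laplace distributions with the same scale, the likelihood-ratio rejection
region is the half-line beyond the midpoint, and its mass under `Lap(μ₀, b)` equals
`(1/2)·exp(−(μ₁−μ₀)/(2b))`. -/
theorem laplace_rejection_region (μ0 μ1 b : ℝ) (h : μ0 < μ1) (hb : 0 < b) :
    {z : ℝ | lapDensity μ0 b z < lapDensity μ1 b z} = Set.Ioi ((μ0 + μ1) / 2) ∧
    (∫ z in Set.Ioi ((μ0 + μ1) / 2), lapDensity μ0 b z)
      = (1 / 2) * Real.exp (-(μ1 - μ0) / (2 * b)) := by
  set m := (μ0 + μ1) / 2 with hm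
  have hmμ0 : μ0 < m := by rw [hm]; linarith
  constructor
  · ext z
    simp only [Set.mem_setOf_eq, Set.mem_Ioi, lapDensity]
    rw [mul_lt_mul_iff_right₀ (by positivity), Real.exp_lt_exp,
      div_lt_div_iff_of_pos_right hb, neg_lt_neg_iff]
    rcases abs_cases (z - μ1) with ⟨h1, h1'⟩ | ⟨h1, h1'⟩ <;>
      rcases abs_cases (z - μ0) with ⟨h2, h2'⟩ | ⟨h2, h2'⟩ <;>
      rw [h1, h2] <;> constructor <;> intro hz <;> (try linarith)
  · have hcong : ∀ z ∈ Set.Ioi m, lapDensity μ0 b z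
        = ((1 / (2 * b)) * Real.exp (μ0 / b)) * Real.exp (-(b⁻¹ * z)) := by
      intro z hz
      have hz' : μ0 < z := lt_trans hmμ0 hz
      rw [lapDensity, abs_of_pos (by linarith : (0:ℝ) < z - μ0)]
      rw [mul_assoc, ← Real.exp_add]
      congr 1
      field_simp
      ring
    rw [setIntegral_congr_fun measurableSet_Ioi hcong, integral_const_mul,
      integral_comp_mul_left_Ioi (fun x => Real.exp (-x)) m (inv_pos.mpr hb)]
    rw [integral_exp_neg_Ioi, smul_eq_mul, inv_inv]
    have key : Real.exp (μ0 / b) * Real.exp (-(b⁻¹ * m)) = Real.exp (-(μ1 - μ0) / (2 * b)) := by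
      rw [← Real.exp_add]; congr 1; rw [hm]; field_simp; ring
    have h2 : 1 / (2 * b) * Real.exp (μ0 / b) * (b * Real.exp (-(b⁻¹ * m)))
        = 1 / 2 * (Real.exp (μ0 / b) * Real.exp (-(b⁻¹ * m))) := by
      field_simp
    rw [h2, key]
end

section
/- If a mechanism M satisfies f-DP where f(α) = 1 − δ − e^ε·α for α ≤ (1−δ)/(e^ε) extended by convexity (i.e., f = f_{ε,δ} = max(0, 1 − δ − e^ε α, e^{−ε}(1 − δ − α))), then M is (ε, δ)-DP, and conversely. -/
open Real Finset

/-- The trade-off function `f_{ε,δ}`. -/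
noncomputable def fEpsDelta (ε δ α : ℝ) : ℝ :=
  max 0 (max (1 - δ - Real.exp ε * α) (Real.exp (-ε) * (1 - δ - α)))

lemma key_randomized {Z : Type*} [Fintype Z] (c δ : ℝ) (A B : Z → ℝ) (φ : Z → ℝ)
    (hφ : ∀ z, 0 ≤ φ z ∧ φ z ≤ 1)
    (h : ∀ E : Finset Z, (∑ z ∈ E, A z) ≤ c * (∑ z ∈ E, B z) + δ) :
    (∑ z, φ z * A z) ≤ c * (∑ z, φ z * B z) + δ := by
  set E := Finset.univ.filter (fun z => 0 < A z - c * B z) with hE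
  have h1 : (∑ z, φ z * A z) - c * (∑ z, φ z * B z)
      = ∑ z, φ z * (A z - c * B z) := by
    rw [Finset.mul_sum, ← Finset.sum_sub_distrib]
    apply Finset.sum_congr rfl
    intro z _; ring
  have h2 : (∑ z, φ z * (A z - c * B z)) ≤ ∑ z ∈ E, (A z - c * B z) := by
    rw [← Finset.sum_filter_add_sum_filter_not Finset.univ
      (fun z => 0 < A z - c * B z) (fun z => φ z * (A z - c * B z)), ← hE]
    have hpos : (∑ z ∈ E, φ z * (A z - c * B z)) ≤ ∑ z ∈ E, (A z - c * B z) := by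
      apply Finset.sum_le_sum
      intro z hz
      have hz' : 0 < A z - c * B z := (Finset.mem_filter.mp hz).2
      nlinarith [(hφ z).1, (hφ z).2]
    have hneg : (∑ z ∈ Finset.univ.filter (fun z => ¬ 0 < A z - c * B z),
        φ z * (A z - c * B z)) ≤ 0 := by
      apply Finset.sum_nonpos
      intro z hz
      have hz' : A z - c * B z ≤ 0 := le_of_not_gt (Finset.mem_filter.mp hz).2
      exact mul_nonpos_of_nonneg_of_nonpos (hφ z).1 hz'
    linarith
  have h3 := h E
  rw [Finset.sum_sub_distrib, ← Finset.mul_sum] at h2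
  linarith [h1, h2, h3]

lemma oneSide {Z : Type*} [Fintype Z] (ε δ : ℝ) (P Q : Z → ℝ) (hQ0 : ∀ z, 0 ≤ Q z)
    (hP1 : ∑ z, P z = 1) (hQ1 : ∑ z, Q z = 1)
    (h1 : ∀ E : Finset Z, (∑ z ∈ E, Q z) ≤ Real.exp ε * (∑ z ∈ E, P z) + δ)
    (h2 : ∀ E : Finset Z, (∑ z ∈ E, P z) ≤ Real.exp ε * (∑ z ∈ E, Q z) + δ)
    (φ : Z → ℝ) (hφ : ∀ z, 0 ≤ φ z ∧ φ z ≤ 1) :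
    fEpsDelta ε δ (∑ z, φ z * P z) ≤ 1 - ∑ z, φ z * Q z := by
  have hQφ : (∑ z, φ z * Q z) ≤ 1 := by
    rw [← hQ1]
    apply Finset.sum_le_sum
    intro z _
    exact mul_le_of_le_one_left (hQ0 z) (hφ z).2
  have ha : (∑ z, φ z * Q z) ≤ Real.exp ε * (∑ z, φ z * P z) + δ :=
    key_randomized _ _ _ _ _ hφ h1
  -- complementary test
  have hψ : ∀ z, 0 ≤ 1 - φ z ∧ 1 - φ z ≤ 1 := fun z => ⟨by linarith [(hφ z).2],
    by linarith [(hφ z).1]⟩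
  have hb' : (∑ z, (1 - φ z) * P z) ≤ Real.exp ε * (∑ z, (1 - φ z) * Q z) + δ :=
    key_randomized _ _ _ _ _ hψ h2
  have hPs : (∑ z, (1 - φ z) * P z) = 1 - ∑ z, φ z * P z := by
    simp [sub_mul, one_mul, Finset.sum_sub_distrib, hP1]
  have hQs : (∑ z, (1 - φ z) * Q z) = 1 - ∑ z, φ z * Q z := by
    simp [sub_mul, one_mul, Finset.sum_sub_distrib, hQ1]
  rw [hPs, hQs] at hb'
  have hb : Real.exp (-ε) * (1 - δ - ∑ z, φ z * P z) ≤ 1 - ∑ z, φ z * Q z := by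
    have hx : 1 - δ - (∑ z, φ z * P z) ≤ Real.exp ε * (1 - ∑ z, φ z * Q z) := by
      linarith
    have := mul_le_mul_of_nonneg_left hx (Real.exp_pos (-ε)).le
    have hee : Real.exp (-ε) * Real.exp ε = 1 := by
      rw [← Real.exp_add]; simp
    nlinarith
  unfold fEpsDelta
  apply max_le (by linarith)
  apply max_le (by linarith) hb

/-- A mechanism is `f_{ε,δ}`-DP iff it is `(ε, δ)`-DP. -/
theorem fEpsDelta_dp_iff_dp {Z : Type*} [Fintype Z] (ε δ : ℝ) (hε : 0 ≤ ε) (hδ : 0 ≤ δ)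
    (P Q : Z → ℝ) (hP0 : ∀ z, 0 ≤ P z) (hQ0 : ∀ z, 0 ≤ Q z)
    (hP1 : ∑ z, P z = 1) (hQ1 : ∑ z, Q z = 1) :
    (∀ φ : Z → ℝ, (∀ z, 0 ≤ φ z ∧ φ z ≤ 1) →
        fEpsDelta ε δ (∑ z, φ z * P z) ≤ 1 - ∑ z, φ z * Q z ∧
        fEpsDelta ε δ (∑ z, φ z * Q z) ≤ 1 - ∑ z, φ z * P z) ↔
    (∀ E : Finset Z, (∑ z ∈ E, P z) ≤ Real.exp ε * (∑ z ∈ E, Q z) + δ ∧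
        (∑ z ∈ E, Q z) ≤ Real.exp ε * (∑ z ∈ E, P z) + δ) := by
  constructor
  · intro h E
    classical
    have hφ : ∀ z, (0:ℝ) ≤ (if z ∈ E then (1:ℝ) else 0) ∧
        (if z ∈ E then (1:ℝ) else 0) ≤ 1 := by
      intro z; split <;> norm_num
    obtain ⟨hA, hB⟩ := h (fun z => if z ∈ E then (1:ℝ) else 0) hφ
    have hPe : (∑ z, (if z ∈ E then (1:ℝ) else 0) * P z) = ∑ z ∈ E, P z := by
      simp [ite_mul, Finset.sum_ite_mem]
    have hQe : (∑ z, (if z ∈ E then (1:ℝ) else 0) * Q z) = ∑ z ∈ E, Q z := by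
      simp [ite_mul, Finset.sum_ite_mem]
    rw [hPe, hQe] at hA hB
    constructor
    · have := le_trans (le_trans (le_max_left _ _) (le_max_right 0 _)) hB
      unfold fEpsDelta at hB
      linarith [le_trans (le_trans (le_max_left (1 - δ - Real.exp ε * (∑ z ∈ E, Q z)) _)
        (le_max_right 0 _)) hB]
    · linarith [le_trans (le_trans (le_max_left (1 - δ - Real.exp ε * (∑ z ∈ E, P z)) _)
        (le_max_right 0 _)) hA]
  · intro h φ hφ
    exact ⟨oneSide ε δ P Q hQ0 hP1 hQ1 (fun E => (h E).2) (fun E => (h E).1) φ hφ,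
      oneSide ε δ Q P hP0 hQ1 hP1 (fun E => (h E).1) (fun E => (h E).2) φ hφ⟩
end
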